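/- Let α ≥ 1 and f continuous on [0,1]. If y'' + (α/x) y' = f on (0,1), with lim_{x→0⁺} x^{α} y'(x) = 0 and y continuous at 0, then y(x) = y(0) + ∫₀ˣ t^{-α} ∫₀ᵗ s^{α} f(s) ds dt for all x ∈ [0,1], i.e., the solution of the singular initial value problem is unique given y(0). -/

import Mathlib

open Set Real intervalIntegral Filter Topology

theorem stmt12 (α : ℝ) (hα : 1 ≤ α) (f y y' y'' : ℝ → ℝ)
    (hf : ContinuousOn f (Icc 0 1))
    (hd1 : ∀ x ∈ Ioo (0:ℝ) 1, HasDerivAt y (y' x) x)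
    (hd2 : ∀ x ∈ Ioo (0:ℝ) 1, HasDerivAt y' (y'' x) x)
    (heq : ∀ x ∈ Ioo (0:ℝ) 1, y'' x + (α / x) * y' x = f x)
    (hbc : Tendsto (fun x => x ^ α * y' x) (𝓝[>] 0) (𝓝 0))
    (hy0 : ContinuousAt y 0)
    (hyc : ContinuousOn y (Icc 0 1)) :
    ∀ x ∈ Icc (0:ℝ) 1,
      y x = y 0 + ∫ t in (0:ℝ)..x, t ^ (-α) * ∫ s in (0:ℝ)..t, s ^ α * f s := by
  have hα0 : (0:ℝ) < α := lt_of_lt_of_le one_pos hα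
  -- bound on f
  obtain ⟨M, hM⟩ : ∃ M, ∀ s ∈ Icc (0:ℝ) 1, ‖f s‖ ≤ M :=
    isCompact_Icc.exists_bound_of_continuousOn hf
  have hM0 : 0 ≤ M := le_trans (norm_nonneg _) (hM 0 ⟨le_refl _, zero_le_one⟩)
  set g0 : ℝ → ℝ := fun s => s ^ α * f s with hg0def
  have hpowc : ContinuousOn (fun s : ℝ => s ^ α) (Icc 0 1) := fun s _ =>
    (Real.continuousAt_rpow_const s α (Or.inr hα0.le)).continuousWithinAt
  have hg0c : ContinuousOn g0 (Icc 0 1) := hpowc.mul hf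
  set h : ℝ → ℝ := fun t => ∫ s in (0:ℝ)..t, g0 s with hhdef
  -- crude bound on g0
  have hg0bd : ∀ s ∈ Icc (0:ℝ) 1, ‖g0 s‖ ≤ M := by
    intro s hs
    have h1 : s ^ α ≤ 1 := Real.rpow_le_one hs.1 hs.2 hα0.le
    have h2 : 0 ≤ s ^ α := Real.rpow_nonneg hs.1 α
    calc ‖g0 s‖ = s ^ α * ‖f s‖ := by
          simp [hg0def, abs_mul, abs_of_nonneg h2]
      _ ≤ 1 * M := mul_le_mul h1 (hM s hs) (norm_nonneg _) zero_le_one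
      _ = M := one_mul M
  -- bound |h t| ≤ M * t for t ∈ [0,1]
  have hhbd : ∀ t ∈ Icc (0:ℝ) 1, ‖h t‖ ≤ M * t := by
    intro t ht
    have := intervalIntegral.norm_integral_le_of_norm_le_const
      (C := M) (f := g0) (a := (0:ℝ)) (b := t) ?_
    · simpa [abs_of_nonneg ht.1] using this
    · intro s hs
      rw [Set.uIoc_of_le ht.1] at hs
      exact hg0bd s ⟨hs.1.le, hs.2.trans ht.2⟩
  -- sharp bound |h t| ≤ M * t^(α+1)/(α+1)
  have hhbd2 : ∀ t ∈ Icc (0:ℝ) 1, ‖h t‖ ≤ M * t ^ (α + 1) / (α + 1) := by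
    intro t ht
    have hsub : Icc (0:ℝ) t ⊆ Icc 0 1 := Icc_subset_Icc le_rfl ht.2
    have hint1 : IntervalIntegrable g0 MeasureTheory.volume 0 t :=
      (hg0c.mono (by rwa [uIcc_of_le ht.1])).intervalIntegrable
    have hint2 : IntervalIntegrable (fun s : ℝ => M * s ^ α) MeasureTheory.volume 0 t :=
      ((continuous_const.continuousOn.mul hpowc).mono (by rwa [uIcc_of_le ht.1])).intervalIntegrable
    have hnormint : IntervalIntegrable (fun s => ‖g0 s‖) MeasureTheory.volume 0 t := hint1.norm
    have h1 : ‖h t‖ ≤ ∫ s in (0:ℝ)..t, ‖g0 s‖ :=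
      intervalIntegral.norm_integral_le_integral_norm ht.1
    have h2 : (∫ s in (0:ℝ)..t, ‖g0 s‖) ≤ ∫ s in (0:ℝ)..t, M * s ^ α := by
      refine intervalIntegral.integral_mono_on ht.1 hnormint hint2 ?_
      intro s hs
      have h2 : 0 ≤ s ^ α := Real.rpow_nonneg hs.1 α
      calc ‖g0 s‖ = s ^ α * ‖f s‖ := by simp [hg0def, abs_mul, abs_of_nonneg h2]
        _ ≤ s ^ α * M := mul_le_mul_of_nonneg_left (hM s (hsub hs)) h2
        _ = M * s ^ α := mul_comm _ _
    have h3 : (∫ s in (0:ℝ)..t, M * s ^ α) = M * (t ^ (α + 1) / (α + 1)) := by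
      rw [intervalIntegral.integral_const_mul, integral_rpow (Or.inl (by linarith))]
      rw [Real.zero_rpow (by positivity)]
      ring
    calc ‖h t‖ ≤ ∫ s in (0:ℝ)..t, M * s ^ α := h1.trans h2
      _ = M * t ^ (α + 1) / (α + 1) := by rw [h3]; ring
  -- tendsto h → 0 at 0+
  have hh0 : Tendsto h (𝓝[>] (0:ℝ)) (𝓝 0) := by
    apply squeeze_zero_norm'
    · filter_upwards [Ioo_mem_nhdsGT_of_mem (Set.mem_Ico.mpr ⟨le_refl (0:ℝ), one_pos⟩)]
        with t ht
      exact hhbd t ⟨ht.1.le, ht.2.le⟩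
    · have : Tendsto (fun t : ℝ => M * t) (𝓝[>] 0) (𝓝 (M * 0)) :=
        ((continuous_const.mul continuous_id).tendsto 0).mono_left nhdsWithin_le_nhds
      simpa using this
  -- derivative of G = t^α * y'
  have hG : ∀ t ∈ Ioo (0:ℝ) 1, HasDerivAt (fun u => u ^ α * y' u) (g0 t) t := by
    intro t ht
    have hp : HasDerivAt (fun u : ℝ => u ^ α) (α * t ^ (α - 1)) t :=
      Real.hasDerivAt_rpow_const (Or.inl ht.1.ne')
    have := hp.mul (hd2 t ht)
    apply this.congr_deriv; symm
    have hf' := heq t ht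
    have hpow : t ^ (α - 1) = t ^ α / t := by
      rw [Real.rpow_sub ht.1, Real.rpow_one]
    rw [hg0def]
    simp only [← hf', hpow]
    field_simp
    ring
  -- G = h on (0,1)
  have hGh : ∀ t ∈ Ioo (0:ℝ) 1, t ^ α * y' t = h t := by
    intro t ht
    have key : ∀ ε ∈ Ioo (0:ℝ) t, t ^ α * y' t - h t = ε ^ α * y' ε - h ε := by
      intro ε hε
      have hsub : uIcc ε t ⊆ Ioo 0 1 := by
        rw [uIcc_of_le hε.2.le]
        exact fun u hu => ⟨lt_of_lt_of_le hε.1 hu.1, lt_of_le_of_lt hu.2 ht.2⟩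
      have hsub2 : uIcc ε t ⊆ Icc 0 1 := hsub.trans Ioo_subset_Icc_self
      have hint : IntervalIntegrable g0 MeasureTheory.volume ε t :=
        (hg0c.mono hsub2).intervalIntegrable
      have hftc : (∫ s in ε..t, g0 s) = t ^ α * y' t - ε ^ α * y' ε :=
        intervalIntegral.integral_eq_sub_of_hasDerivAt (fun u hu => hG u (hsub hu)) hint
      have hint0ε : IntervalIntegrable g0 MeasureTheory.volume 0 ε := by
        apply ContinuousOn.intervalIntegrable
        apply hg0c.mono
        rw [uIcc_of_le hε.1.le]
        exact Icc_subset_Icc le_rfl (hε.2.le.trans ht.2.le)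
      have hadd : h ε + ∫ s in ε..t, g0 s = h t :=
        intervalIntegral.integral_add_adjacent_intervals hint0ε hint
      have : (∫ s in ε..t, g0 s) = h t - h ε := by linarith
      rw [this] at hftc
      linarith
    have h1 : Tendsto (fun ε => ε ^ α * y' ε - h ε) (𝓝[>] (0:ℝ)) (𝓝 0) := by
      simpa using hbc.sub hh0
    have h2 : Tendsto (fun ε => ε ^ α * y' ε - h ε) (𝓝[>] (0:ℝ))
        (𝓝 (t ^ α * y' t - h t)) := by
      apply Tendsto.congr' _ tendsto_const_nhds
      filter_upwards [Ioo_mem_nhdsGT_of_mem (Set.mem_Ico.mpr ⟨le_refl (0:ℝ), ht.1⟩)]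
        with ε hε
      exact key ε hε
    have := tendsto_nhds_unique h2 h1
    linarith
  -- F
  set F : ℝ → ℝ := fun t => t ^ (-α) * h t with hFdef
  have hyF : ∀ t ∈ Ioo (0:ℝ) 1, y' t = F t := by
    intro t ht
    have hpos : (0:ℝ) < t ^ α := Real.rpow_pos_of_pos ht.1 α
    rw [hFdef]
    simp only [Real.rpow_neg ht.1.le, ← hGh t ht]
    field_simp
  -- bound on F
  have hFbd : ∀ t ∈ Ioc (0:ℝ) 1, ‖F t‖ ≤ M := by
    intro t ht
    have hpos : (0:ℝ) < t ^ (-α) := Real.rpow_pos_of_pos ht.1 (-α)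
    have : ‖F t‖ = t ^ (-α) * ‖h t‖ := by
      rw [hFdef]; simp [abs_mul, abs_of_nonneg hpos.le]
    rw [this]
    calc t ^ (-α) * ‖h t‖ ≤ t ^ (-α) * (M * t ^ (α + 1) / (α + 1)) :=
          mul_le_mul_of_nonneg_left (hhbd2 t ⟨ht.1.le, ht.2⟩) hpos.le
      _ = M * (t ^ (-α) * t ^ (α + 1)) / (α + 1) := by ring
      _ = M * t / (α + 1) := by
          rw [← Real.rpow_add ht.1]
          norm_num
      _ ≤ M * 1 / 1 := by
          apply div_le_div₀ (by positivity) (mul_le_mul_of_nonneg_left ht.2 hM0) one_pos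
          linarith
      _ = M := by ring
  -- integrability of F on (0,1]
  have hhc : ContinuousOn h (Icc (0:ℝ) 1) := by
    have : MeasureTheory.IntegrableOn g0 (uIcc (0:ℝ) 1) MeasureTheory.volume := by
      rw [uIcc_of_le (zero_le_one : (0:ℝ) ≤ 1)]
      exact ((integrableOn_Icc_iff_integrableOn_Ioc).mpr
        ((intervalIntegrable_iff_integrableOn_Ioc_of_le zero_le_one).mp
          (hg0c.intervalIntegrable_of_Icc zero_le_one)))
    simpa [uIcc_of_le (zero_le_one : (0:ℝ) ≤ 1)] using
      intervalIntegral.continuousOn_primitive_interval this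
  have hFc : ContinuousOn F (Ioc (0:ℝ) 1) := by
    apply ContinuousOn.mul
    · exact fun t ht => (Real.continuousAt_rpow_const t (-α) (Or.inl ht.1.ne')).continuousWithinAt
    · exact hhc.mono Ioc_subset_Icc_self
  have hFint : MeasureTheory.IntegrableOn F (Ioc (0:ℝ) 1) MeasureTheory.volume := by
    refine ⟨(hFc.aemeasurable measurableSet_Ioc).aestronglyMeasurable,
      MeasureTheory.HasFiniteIntegral.restrict_of_bounded (C := M) (by simp) ?_⟩
    exact (MeasureTheory.ae_restrict_iff' measurableSet_Ioc).mpr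
        (MeasureTheory.ae_of_all _ hFbd)
  have hFii : ∀ a b : ℝ, a ∈ Icc (0:ℝ) 1 → b ∈ Icc (0:ℝ) 1 →
      IntervalIntegrable F MeasureTheory.volume a b := by
    intro a b ha hb
    rw [intervalIntegrable_iff]
    exact hFint.mono_set (fun u hu => ⟨lt_of_le_of_lt (le_min ha.1 hb.1) hu.1,
      hu.2.trans (max_le ha.2 hb.2)⟩)
  -- tendsto ∫_0^ε F → 0
  have hprim0 : Tendsto (fun ε => ∫ t in (0:ℝ)..ε, F t) (𝓝[>] (0:ℝ)) (𝓝 0) := by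
    apply squeeze_zero_norm'
    · filter_upwards [Ioo_mem_nhdsGT_of_mem (Set.mem_Ico.mpr ⟨le_refl (0:ℝ), one_pos⟩)]
        with ε hε
      have := intervalIntegral.norm_integral_le_of_norm_le_const
        (C := M) (f := F) (a := (0:ℝ)) (b := ε) ?_
      · simpa [abs_of_nonneg hε.1.le] using this
      · intro s hs
        rw [Set.uIoc_of_le hε.1.le] at hs
        exact hFbd s ⟨hs.1, hs.2.trans hε.2.le⟩
    · have : Tendsto (fun ε : ℝ => M * ε) (𝓝[>] 0) (𝓝 (M * 0)) :=
        ((continuous_const.mul continuous_id).tendsto 0).mono_left nhdsWithin_le_nhds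
      simpa using this
  -- key identity on (0,1)
  have key : ∀ x ∈ Ioo (0:ℝ) 1, y x = y 0 + ∫ t in (0:ℝ)..x, F t := by
    intro x hx
    have key2 : ∀ ε ∈ Ioo (0:ℝ) x, y ε = y x - (∫ t in (0:ℝ)..x, F t) + ∫ t in (0:ℝ)..ε, F t := by
      intro ε hε
      have hsub : uIcc ε x ⊆ Ioo 0 1 := by
        rw [uIcc_of_le hε.2.le]
        exact fun u hu => ⟨lt_of_lt_of_le hε.1 hu.1, lt_of_le_of_lt hu.2 hx.2⟩
      have hy'int : IntervalIntegrable y' MeasureTheory.volume ε x := by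
        apply ContinuousOn.intervalIntegrable
        exact fun u hu => ((hd2 u (hsub hu)).continuousAt).continuousWithinAt
      have hftc : (∫ t in ε..x, y' t) = y x - y ε :=
        intervalIntegral.integral_eq_sub_of_hasDerivAt (fun u hu => hd1 u (hsub hu)) hy'int
      have hcongr : (∫ t in ε..x, y' t) = ∫ t in ε..x, F t :=
        intervalIntegral.integral_congr (fun u hu => hyF u (hsub hu))
      have hε1 : ε ∈ Icc (0:ℝ) 1 := ⟨hε.1.le, hε.2.le.trans hx.2.le⟩
      have hx1 : x ∈ Icc (0:ℝ) 1 := ⟨hx.1.le, hx.2.le⟩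
      have hadd : (∫ t in (0:ℝ)..ε, F t) + ∫ t in ε..x, F t = ∫ t in (0:ℝ)..x, F t :=
        intervalIntegral.integral_add_adjacent_intervals
          (hFii 0 ε ⟨le_refl _, zero_le_one⟩ hε1) (hFii ε x hε1 hx1)
      have := hftc.symm.trans hcongr
      linarith
    have h1 : Tendsto y (𝓝[>] (0:ℝ)) (𝓝 (y 0)) := hy0.tendsto.mono_left nhdsWithin_le_nhds
    have h2 : Tendsto (fun ε => y x - (∫ t in (0:ℝ)..x, F t) + ∫ t in (0:ℝ)..ε, F t)
        (𝓝[>] (0:ℝ)) (𝓝 (y x - (∫ t in (0:ℝ)..x, F t) + 0)) :=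
      tendsto_const_nhds.add hprim0
    have h3 : Tendsto y (𝓝[>] (0:ℝ)) (𝓝 (y x - (∫ t in (0:ℝ)..x, F t) + 0)) := by
      apply h2.congr'
      filter_upwards [Ioo_mem_nhdsGT_of_mem (Set.mem_Ico.mpr ⟨le_refl (0:ℝ), hx.1⟩)]
        with ε hε
      exact (key2 ε hε).symm
    have := tendsto_nhds_unique h1 h3
    linarith
  -- conclusion
  intro x hx
  rcases eq_or_lt_of_le hx.1 with h0 | h0
  · simp [← h0]
  rcases eq_or_lt_of_le hx.2 with h1 | h1
  swap
  · exact key x ⟨h0, h1⟩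
  · -- x = 1 : take limits from the left
    subst h1
    have hne : (𝓝[Ioo (0:ℝ) 1] 1).NeBot := by
      apply mem_closure_iff_nhdsWithin_neBot.mp
      rw [closure_Ioo one_ne_zero.symm]
      exact ⟨zero_le_one, le_refl 1⟩
    have hmono : 𝓝[Ioo (0:ℝ) 1] (1:ℝ) ≤ 𝓝[Icc (0:ℝ) 1] 1 :=
      nhdsWithin_mono 1 Ioo_subset_Icc_self
    have t1 : Tendsto y (𝓝[Ioo (0:ℝ) 1] 1) (𝓝 (y 1)) :=
      ((hyc 1 ⟨zero_le_one, le_refl 1⟩).tendsto).mono_left hmono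
    have hPc : ContinuousOn (fun u => ∫ t in (0:ℝ)..u, F t) (Icc (0:ℝ) 1) := by
      have : MeasureTheory.IntegrableOn F (uIcc (0:ℝ) 1) MeasureTheory.volume := by
        rw [uIcc_of_le zero_le_one]
        exact (integrableOn_Icc_iff_integrableOn_Ioc).mpr hFint
      simpa [uIcc_of_le (zero_le_one : (0:ℝ) ≤ 1)] using
        intervalIntegral.continuousOn_primitive_interval this
    have t2 : Tendsto (fun u => y 0 + ∫ t in (0:ℝ)..u, F t) (𝓝[Ioo (0:ℝ) 1] 1)
        (𝓝 (y 0 + ∫ t in (0:ℝ)..1, F t)) :=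
      (tendsto_const_nhds.add (((hPc 1 ⟨zero_le_one, le_refl 1⟩).tendsto).mono_left hmono))
    have t3 : Tendsto y (𝓝[Ioo (0:ℝ) 1] 1) (𝓝 (y 0 + ∫ t in (0:ℝ)..1, F t)) := by
      apply t2.congr'
      filter_upwards [self_mem_nhdsWithin] with u hu
      exact (key u hu).symm
    exact tendsto_nhds_unique t1 t3
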